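/- Let a > 0, b > 0. The MRLAI function L(t) = b·t/((a + b·t)·log((a + b·t)/a)) corresponding to μ(t) = 1/(a + b·t) is strictly decreasing on (0,∞). -/

import Mathlib

open Real Set

lemma mrlai_aux_strictAnti :
    StrictAntiOn (fun x : ℝ => (x - 1) / (x * Real.log x)) (Set.Ioi 1) := by
  apply strictAntiOn_of_deriv_neg (convex_Ioi (1:ℝ))
  · -- continuity
    apply ContinuousOn.div
    · fun_prop
    · exact ((continuousOn_id).mul (Real.continuousOn_log.mono (by
        intro x hx; exact ne_of_gt (lt_trans one_pos hx))))
    · intro x hx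
      have hx1 : (1:ℝ) < x := hx
      have hlog : 0 < Real.log x := Real.log_pos hx1
      positivity
  · intro x hx
    rw [interior_Ioi] at hx
    have hx1 : (1:ℝ) < x := hx
    have hx0 : (0:ℝ) < x := lt_trans one_pos hx1
    have hlog : 0 < Real.log x := Real.log_pos hx1
    have hne : x * Real.log x ≠ 0 := by positivity
    have h1 : HasDerivAt (fun x : ℝ => x - 1) 1 x := by
      simpa using (hasDerivAt_id x).sub_const 1
    have h2 : HasDerivAt (fun x : ℝ => x * Real.log x) (Real.log x + 1) x := by
      have := (hasDerivAt_id x).mul (Real.hasDerivAt_log hx0.ne')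
      refine this.congr_deriv ?_
      rw [show id x = x from rfl, mul_inv_cancel₀ hx0.ne']; ring
    have h3 : HasDerivAt (fun x : ℝ => (x - 1) / (x * Real.log x))
        ((1 * (x * Real.log x) - (x - 1) * (Real.log x + 1)) / (x * Real.log x) ^ 2) x :=
      h1.div h2 hne
    rw [h3.deriv]
    apply div_neg_of_neg_of_pos
    · have : Real.log x < x - 1 := Real.log_lt_sub_one_of_pos hx0 hx1.ne'
      nlinarith
    · positivity

/-- For a, b > 0, the function
L(t) = b t / ((a + b t) * log((a + b t)/a)) is strictly decreasing on (0,∞). -/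
theorem mrlai_reciprocal_linear_strictAnti (a b : ℝ) (ha : 0 < a) (hb : 0 < b) :
    StrictAntiOn
      (fun t : ℝ => b * t / ((a + b * t) * Real.log ((a + b * t) / a)))
      (Set.Ioi 0) := by
  have key : ∀ u : ℝ, 0 < u →
      b * u / ((a + b * u) * Real.log ((a + b * u) / a)) =
      ((a + b * u) / a - 1) / (((a + b * u) / a) * Real.log ((a + b * u) / a)) := by
    intro u hu
    have hab : 0 < a + b * u := by positivity
    set c := Real.log ((a + b * u) / a)
    rcases eq_or_ne c 0 with hc | hc
    · simp [hc]
    · field_simp; ring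
  have hmem : ∀ u : ℝ, 0 < u → (a + b * u) / a ∈ Set.Ioi (1:ℝ) := by
    intro u hu
    have : a < a + b * u := by nlinarith
    simpa [Set.mem_Ioi] using (one_lt_div ha).mpr this
  intro s hs t ht hst
  have hs' : (0:ℝ) < s := hs
  have ht' : (0:ℝ) < t := ht
  simp only
  rw [key s hs', key t ht']
  exact mrlai_aux_strictAnti (hmem s hs') (hmem t ht')
    ((div_lt_div_iff_of_pos_right ha).mpr (by nlinarith))
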